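/- Let n ≥ 1 and let S₁, S₂, S₃ be pairwise disjoint subsets of ℝⁿ such that each S_i contains a point x_i at which the coverage of S_i is infinite, i.e., for every r > 0 there exist q ∈ ℝⁿ and s > r with x_i ∈ B(q, s) ⊆ S_i. Then a contradiction follows; hence a classifier with infinite pointwise coverage can have at most two labels in its label set. -/

import Mathlib

open Metric

variable {E : Type*} [NormedAddCommGroup E] [InnerProductSpace ℝ E]

private lemma pair_inner_lt (q₁ q₂ y₁ y₂ : E) (s₁ s₂ D : ℝ) (hD : 0 < D)
    (hd : s₁ + s₂ ≤ dist q₁ q₂)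
    (h₁ : dist y₁ q₁ < s₁) (h₂ : dist y₂ q₂ < s₂)
    (hv : dist y₁ y₂ ≤ D) (hs₁ : 8 * D < s₁) (hs₂ : 8 * D < s₂) :
    inner ℝ (s₁⁻¹ • (q₁ - y₁)) (s₂⁻¹ • (q₂ - y₂)) < (-1/2 : ℝ) := by
  set a₁ := q₁ - y₁ with ha₁
  set a₂ := q₂ - y₂ with ha₂
  set v := y₁ - y₂ with hvdef
  have hq : q₁ - q₂ = a₁ - a₂ + v := by rw [ha₁, ha₂, hvdef]; abel
  have hdist : dist q₁ q₂ = ‖a₁ - a₂ + v‖ := by rw [dist_eq_norm, hq]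
  have hna₁ : ‖a₁‖ < s₁ := by rwa [dist_eq_norm, norm_sub_rev] at h₁
  have hna₂ : ‖a₂‖ < s₂ := by rwa [dist_eq_norm, norm_sub_rev] at h₂
  have hnv : ‖v‖ ≤ D := by rwa [dist_eq_norm] at hv
  have hs₁' : 0 < s₁ := lt_trans (by nlinarith) hs₁
  have hs₂' : 0 < s₂ := lt_trans (by nlinarith) hs₂
  have key : (s₁ + s₂)^2 ≤ ‖a₁ - a₂ + v‖^2 := by
    have h := hd.trans_eq hdist
    nlinarith [norm_nonneg (a₁ - a₂ + v)]
  have expand : ‖a₁ - a₂ + v‖^2 = ‖a₁‖^2 + ‖a₂‖^2 + ‖v‖^2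
      - 2 * inner ℝ a₁ a₂ + 2 * inner ℝ a₁ v - 2 * inner ℝ a₂ v := by
    simp only [← real_inner_self_eq_norm_sq]
    simp only [inner_sub_left, inner_sub_right, inner_add_left, inner_add_right,
      real_inner_comm a₁ a₂, real_inner_comm v a₁, real_inner_comm v a₂]
    ring
  have cs1 : |(inner ℝ a₁ v : ℝ)| ≤ ‖a₁‖ * ‖v‖ := abs_real_inner_le_norm a₁ v
  have cs2 : |(inner ℝ a₂ v : ℝ)| ≤ ‖a₂‖ * ‖v‖ := abs_real_inner_le_norm a₂ v
  have hib : (inner ℝ a₁ a₂ : ℝ) < -(s₁ * s₂) / 2 := by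
    rw [expand] at key
    rw [abs_le] at cs1 cs2
    nlinarith [norm_nonneg a₁, norm_nonneg a₂, norm_nonneg v]
  rw [real_inner_smul_left, real_inner_smul_right]
  have step := mul_lt_mul_of_pos_left
    (mul_lt_mul_of_pos_left hib (inv_pos.mpr hs₂')) (inv_pos.mpr hs₁')
  have heq : s₁⁻¹ * (s₂⁻¹ * (-(s₁ * s₂) / 2)) = -1/2 := by field_simp
  linarith [step, heq.ge]

private lemma no_three_antipodal (b₁ b₂ b₃ : E)
    (h1 : ‖b₁‖ ≤ 1) (h2 : ‖b₂‖ ≤ 1) (h3 : ‖b₃‖ ≤ 1)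
    (h12 : (inner ℝ b₁ b₂ : ℝ) < -1/2) (h13 : (inner ℝ b₁ b₃ : ℝ) < -1/2)
    (h23 : (inner ℝ b₂ b₃ : ℝ) < -1/2) : False := by
  have hnn : (0:ℝ) ≤ ‖b₁ + b₂ + b₃‖^2 := sq_nonneg _
  have expand : ‖b₁ + b₂ + b₃‖^2 = ‖b₁‖^2 + ‖b₂‖^2 + ‖b₃‖^2
      + 2 * inner ℝ b₁ b₂ + 2 * inner ℝ b₁ b₃ + 2 * inner ℝ b₂ b₃ := by
    simp only [← real_inner_self_eq_norm_sq]
    simp only [inner_add_left, inner_add_right,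
      real_inner_comm b₂ b₁, real_inner_comm b₃ b₁, real_inner_comm b₃ b₂]
    ring
  nlinarith [norm_nonneg b₁, norm_nonneg b₂, norm_nonneg b₃]

/-- Three pairwise disjoint subsets of `ℝⁿ`, each containing a point at which its
coverage is infinite, yield a contradiction: a classifier with infinite pointwise
coverage has at most two labels. -/
theorem at_most_two_labels_of_infinite_coverage
    (n : ℕ) (hn : 1 ≤ n) (S₁ S₂ S₃ : Set (EuclideanSpace ℝ (Fin n)))
    (h₁₂ : Disjoint S₁ S₂) (h₁₃ : Disjoint S₁ S₃) (h₂₃ : Disjoint S₂ S₃)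
    (x₁ x₂ x₃ : EuclideanSpace ℝ (Fin n))
    (hx₁ : x₁ ∈ S₁) (hx₂ : x₂ ∈ S₂) (hx₃ : x₃ ∈ S₃)
    (hcov₁ : ∀ r : ℝ, 0 < r → ∃ (q : EuclideanSpace ℝ (Fin n)) (s : ℝ),
      r < s ∧ x₁ ∈ ball q s ∧ ball q s ⊆ S₁)
    (hcov₂ : ∀ r : ℝ, 0 < r → ∃ (q : EuclideanSpace ℝ (Fin n)) (s : ℝ),
      r < s ∧ x₂ ∈ ball q s ∧ ball q s ⊆ S₂)
    (hcov₃ : ∀ r : ℝ, 0 < r → ∃ (q : EuclideanSpace ℝ (Fin n)) (s : ℝ),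
      r < s ∧ x₃ ∈ ball q s ∧ ball q s ⊆ S₃) :
    False := by
  set D : ℝ := dist x₁ x₂ + dist x₁ x₃ + dist x₂ x₃ + 1 with hDdef
  have hD : 0 < D := by positivity
  have hD12 : dist x₁ x₂ ≤ D := by
    have h1 : (0:ℝ) ≤ dist x₁ x₃ := dist_nonneg
    have h2 : (0:ℝ) ≤ dist x₂ x₃ := dist_nonneg
    rw [hDdef]; linarith
  have hD13 : dist x₁ x₃ ≤ D := by
    have h1 : (0:ℝ) ≤ dist x₁ x₂ := dist_nonneg
    have h2 : (0:ℝ) ≤ dist x₂ x₃ := dist_nonneg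
    rw [hDdef]; linarith
  have hD23 : dist x₂ x₃ ≤ D := by
    have h1 : (0:ℝ) ≤ dist x₁ x₂ := dist_nonneg
    have h2 : (0:ℝ) ≤ dist x₁ x₃ := dist_nonneg
    rw [hDdef]; linarith
  obtain ⟨q₁, s₁, hs₁, hb₁, hsub₁⟩ := hcov₁ (8 * D) (by positivity)
  obtain ⟨q₂, s₂, hs₂, hb₂, hsub₂⟩ := hcov₂ (8 * D) (by positivity)
  obtain ⟨q₃, s₃, hs₃, hb₃, hsub₃⟩ := hcov₃ (8 * D) (by positivity)
  have hs₁' : 0 < s₁ := lt_trans (by positivity) hs₁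
  have hs₂' : 0 < s₂ := lt_trans (by positivity) hs₂
  have hs₃' : 0 < s₃ := lt_trans (by positivity) hs₃
  have hd₁₂ : s₁ + s₂ ≤ dist q₁ q₂ :=
    (disjoint_ball_ball_iff hs₁' hs₂').mp (h₁₂.mono hsub₁ hsub₂)
  have hd₁₃ : s₁ + s₃ ≤ dist q₁ q₃ :=
    (disjoint_ball_ball_iff hs₁' hs₃').mp (h₁₃.mono hsub₁ hsub₃)
  have hd₂₃ : s₂ + s₃ ≤ dist q₂ q₃ :=
    (disjoint_ball_ball_iff hs₂' hs₃').mp (h₂₃.mono hsub₂ hsub₃)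
  rw [mem_ball] at hb₁ hb₂ hb₃
  have hi12 := pair_inner_lt q₁ q₂ x₁ x₂ s₁ s₂ D hD hd₁₂ hb₁ hb₂ hD12 hs₁ hs₂
  have hi13 := pair_inner_lt q₁ q₃ x₁ x₃ s₁ s₃ D hD hd₁₃ hb₁ hb₃ hD13 hs₁ hs₃
  have hi23 := pair_inner_lt q₂ q₃ x₂ x₃ s₂ s₃ D hD hd₂₃ hb₂ hb₃ hD23 hs₂ hs₃
  have hnb : ∀ (q x : EuclideanSpace ℝ (Fin n)) (s : ℝ), 0 < s → dist x q < s →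
      ‖s⁻¹ • (q - x)‖ ≤ 1 := by
    intro q x s hs h
    rw [norm_smul, norm_inv, Real.norm_eq_abs, abs_of_pos hs]
    rw [inv_mul_le_iff₀ hs, mul_one, ← norm_sub_rev, ← dist_eq_norm]
    exact h.le
  exact no_three_antipodal _ _ _ (hnb q₁ x₁ s₁ hs₁' hb₁) (hnb q₂ x₂ s₂ hs₂' hb₂)
    (hnb q₃ x₃ s₃ hs₃' hb₃) hi12 hi13 hi23
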